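/- For distinct positive reals μ₁ < μ₂ < ⋯ (infinitely many) with ∑ 1/μ_n < ∞, the closed linear span in L²[0,∞) of the functions {e^{-μ_n t}}_{n≥1} is a proper closed subspace of L²[0,∞); equivalently, there exists a nonzero g ∈ L²[0,∞) with ∫₀^∞ e^{-μ_n t} g(t) dt = 0 for all n. -/

import Mathlib

open MeasureTheory Set Real Finset

noncomputable section
namespace MuntzAux

local notation "M" => volume.restrict (Ici (0:ℝ))
local notation "⟪" x ", " y "⟫" => @inner ℝ _ _ x y



lemma integral_exp (c : ℝ) (hc : 0 < c) : ∫ t in Ioi (0:ℝ), Real.exp (-c * t) = 1 / c := by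
  have h : ∀ x ∈ Ici (0:ℝ), HasDerivAt (fun t => -Real.exp (-c * t) / c) (Real.exp (-c * x)) x := by
    intro x _
    have h1 : HasDerivAt (fun t : ℝ => -c * t) (-c) x := by
      simpa using (hasDerivAt_id x).const_mul (-c)
    have := (h1.exp.neg.div_const c)
    refine this.congr_deriv ?_
    have hc' := hc.ne'
    field_simp
  have htend : Filter.Tendsto (fun t => -Real.exp (-c * t) / c) Filter.atTop (nhds 0) := by
    have : Filter.Tendsto (fun t : ℝ => Real.exp (-c * t)) Filter.atTop (nhds 0) := by
      apply Real.tendsto_exp_atBot.comp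
      exact Filter.tendsto_id.const_mul_atTop_of_neg (neg_neg_iff_pos.2 hc)
    simpa using (this.neg.div_const c)
  have := integral_Ioi_of_hasDerivAt_of_tendsto' h (exp_neg_integrableOn_Ioi 0 hc) htend
  simp only [neg_mul] at this ⊢
  simp at this
  rw [this]; field_simp
  
lemma memLp_exp {a : ℝ} (ha : 0 < a) : MemLp (fun t => Real.exp (-a * t)) 2 M := by
  rw [memLp_two_iff_integrable_sq (Continuous.aestronglyMeasurable (by continuity))]
  have h2 : ∀ x : ℝ, Real.exp (-a * x) ^ 2 = Real.exp (-(2*a) * x) := by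
    intro x; rw [← Real.exp_nat_mul]; ring_nf
  simp_rw [h2]
  have := (exp_neg_integrableOn_Ioi (0:ℝ) (show (0:ℝ) < 2*a by linarith)).congr_set_ae Ioi_ae_eq_Ici.symm
  exact this

def expL2 (a : ℝ) : Lp ℝ 2 M :=
  if h : 0 < a then (memLp_exp h).toLp _ else 0

lemma expL2_coe {a : ℝ} (ha : 0 < a) : (expL2 a : ℝ → ℝ) =ᵐ[M] fun t => Real.exp (-a * t) := by
  rw [expL2, dif_pos ha]; exact (memLp_exp ha).coeFn_toLp



lemma inner_expL2 {a : ℝ} (ha : 0 < a) (f : Lp ℝ 2 M) :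
    ⟪expL2 a, f⟫ = ∫ t in Ici (0:ℝ), Real.exp (-a * t) * f t := by
  rw [L2.inner_def]
  refine integral_congr_ae ?_
  filter_upwards [expL2_coe ha] with t ht
  simp [ht, RCLike.inner_apply]; ring

lemma inner_expL2_expL2 {a b : ℝ} (ha : 0 < a) (hb : 0 < b) :
    ⟪expL2 a, expL2 b⟫ = 1 / (a + b) := by
  rw [inner_expL2 ha]
  have h1 : ∫ t in Ici (0:ℝ), Real.exp (-a * t) * (expL2 b : ℝ → ℝ) t
      = ∫ t in Ici (0:ℝ), Real.exp (-(a+b) * t) := by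
    refine integral_congr_ae ?_
    filter_upwards [expL2_coe hb] with t ht
    rw [ht, ← Real.exp_add]; ring_nf
  rw [h1, integral_Ici_eq_integral_Ioi, integral_exp _ (by linarith)]



def cc (μ : ℕ → ℝ) (l : ℝ) (N : ℕ) : ℝ := ∏ n ∈ Finset.range N, (l + μ n) / (l - μ n)

def ck (μ : ℕ → ℝ) (l : ℝ) (N k : ℕ) : ℝ :=
  (∏ n ∈ Finset.range N, (-μ k - μ n)) /
    ((l - μ k) * ∏ n ∈ (Finset.range N).erase k, (μ n - μ k))

open Polynomial in
lemma polyId {μ : ℕ → ℝ} {l : ℝ} (hl : 0 < l) (hlt : ∀ n, l < μ n)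
    (hinj : Function.Injective μ) (N : ℕ) :
    (C (cc μ l N) * ∏ n ∈ Finset.range N, (X + C (μ n))
      + ∑ k ∈ Finset.range N, C (ck μ l N k) *
          ((X + C l) * ∏ n ∈ (Finset.range N).erase k, (X + C (μ n))))
    = ∏ n ∈ Finset.range N, (X - C (μ n)) := by
  set P : ℝ[X] := C (cc μ l N) * ∏ n ∈ Finset.range N, (X + C (μ n))
      + ∑ k ∈ Finset.range N, C (ck μ l N k) *
          ((X + C l) * ∏ n ∈ (Finset.range N).erase k, (X + C (μ n))) with hP
  set Q : ℝ[X] := ∏ n ∈ Finset.range N, (X - C (μ n)) with hQ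
  have hlne : ∀ n, l - μ n ≠ 0 := fun n => sub_ne_zero.mpr (ne_of_lt (hlt n))
  have hdegprod : ∀ (s : Finset ℕ), (∏ n ∈ s, (X + C (μ n)) : ℝ[X]).natDegree ≤ s.card := by
    intro s
    refine le_trans (Polynomial.natDegree_prod_le _ _) ?_
    simp [natDegree_X_add_C]
  have hdegP : P.natDegree ≤ N := by
    refine le_trans (natDegree_add_le _ _) (max_le ?_ ?_)
    · refine le_trans (natDegree_C_mul_le _ _) (le_trans (hdegprod _) (by simp))
    · refine natDegree_sum_le_of_forall_le _ _ (fun k hk => ?_)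
      refine le_trans (natDegree_C_mul_le _ _) (le_trans (natDegree_mul_le) ?_)
      have h2 := hdegprod ((Finset.range N).erase k)
      rw [Finset.card_erase_of_mem hk, Finset.card_range] at h2
      have hk' : k < N := Finset.mem_range.mp hk
      rw [natDegree_X_add_C]
      omega
  have hdegQ : Q.natDegree ≤ N := by
    refine le_trans (Polynomial.natDegree_prod_le _ _) ?_
    simp [natDegree_X_sub_C]
  have hS : ∀ y ∈ insert (-l) ((Finset.range N).image fun k => -μ k), (P - Q).eval y = 0 := by
    intro y hy
    rw [Finset.mem_insert, Finset.mem_image] at hy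
    rw [eval_sub, sub_eq_zero]
    rcases hy with rfl | ⟨j, hj, rfl⟩
    · rw [hP, hQ]
      simp only [eval_add, eval_mul, eval_finset_sum, eval_prod, eval_C, eval_X, eval_sub]
      rw [Finset.sum_eq_zero, add_zero]
      · rw [cc, ← Finset.prod_mul_distrib]
        refine Finset.prod_congr rfl fun n _ => ?_
        rw [div_mul_eq_mul_div, div_eq_iff (hlne n)]
        ring
      · intro k _
        simp
    · rw [hP, hQ]
      simp only [eval_add, eval_mul, eval_finset_sum, eval_prod, eval_C, eval_X, eval_sub]
      rw [Finset.prod_eq_zero hj (by ring : -μ j + μ j = 0), mul_zero, zero_add]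
      rw [Finset.sum_eq_single_of_mem j hj (fun k hk hkj => ?_)]
      swap
      · have hjk : j ∈ (Finset.range N).erase k := Finset.mem_erase.mpr ⟨Ne.symm hkj, hj⟩
        rw [Finset.prod_eq_zero hjk (by ring : -μ j + μ j = 0)]
        ring
      have he1 : (∏ n ∈ (Finset.range N).erase j, (-μ j + μ n)) = ∏ n ∈ (Finset.range N).erase j, (μ n - μ j) :=
        Finset.prod_congr rfl (fun n _ => by ring)
      have hden : (l - μ j) * ∏ n ∈ (Finset.range N).erase j, (μ n - μ j) ≠ 0 := by
        refine mul_ne_zero (hlne j) ?_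
        rw [Finset.prod_ne_zero_iff]
        intro n hn
        exact sub_ne_zero.mpr (fun h => (Finset.mem_erase.mp hn).1 (hinj h))
      rw [he1, ck, show (-μ j + l) = l - μ j by ring, div_mul_cancel₀ _ hden]
  have hcard : (insert (-l) ((Finset.range N).image fun k => -μ k)).card = N + 1 := by
    rw [Finset.card_insert_of_notMem, Finset.card_image_of_injective _
        (fun a b h => hinj (neg_injective h)), Finset.card_range]
    simp only [Finset.mem_image, not_exists]
    intro j
    rintro ⟨hj, hjl⟩
    exact absurd (neg_injective hjl) (ne_of_gt (hlt j))
  have h0 : P - Q = 0 := by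
    refine eq_zero_of_natDegree_lt_card_of_eval_eq_zero' _ _ hS ?_
    rw [hcard]
    exact lt_of_le_of_lt (le_trans (natDegree_sub_le _ _) (max_le hdegP hdegQ)) (Nat.lt_succ_self N)
  exact sub_eq_zero.mp h0



lemma ratId {μ : ℕ → ℝ} {l : ℝ} (hl : 0 < l) (hlt : ∀ n, l < μ n)
    (hinj : Function.Injective μ) (N : ℕ) {x : ℝ}
    (hxl : x + l ≠ 0) (hxn : ∀ n, x + μ n ≠ 0) :
    cc μ l N / (x + l) + ∑ k ∈ Finset.range N, ck μ l N k / (x + μ k)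
      = (∏ n ∈ Finset.range N, (x - μ n)) / ((x + l) * ∏ n ∈ Finset.range N, (x + μ n)) := by
  have hprod : (∏ n ∈ Finset.range N, (x + μ n)) ≠ 0 :=
    Finset.prod_ne_zero_iff.mpr fun n _ => hxn n
  have hevalP := congrArg (Polynomial.eval x) (polyId hl hlt hinj N)
  simp only [Polynomial.eval_add, Polynomial.eval_mul, Polynomial.eval_finset_sum,
    Polynomial.eval_prod, Polynomial.eval_C, Polynomial.eval_X, Polynomial.eval_sub] at hevalP
  rw [← hevalP, add_div, Finset.sum_div]
  congr 1
  · exact (mul_div_mul_right _ _ hprod).symm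
  · refine Finset.sum_congr rfl fun k hk => ?_
    have hpe : ((x + l) * ∏ n ∈ (Finset.range N).erase k, (x + μ n)) ≠ 0 :=
      mul_ne_zero hxl (Finset.prod_ne_zero_iff.mpr fun n _ => hxn n)
    rw [← Finset.mul_prod_erase _ _ hk,
      show (x + l) * ((x + μ k) * ∏ n ∈ (Finset.range N).erase k, (x + μ n))
        = (x + μ k) * ((x + l) * ∏ n ∈ (Finset.range N).erase k, (x + μ n)) by ring]
    exact (mul_div_mul_right _ _ hpe).symm


lemma phi_props {μ : ℕ → ℝ} {l : ℝ} (hl : 0 < l) (hlt : ∀ n, l < μ n)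
    (hinj : Function.Injective μ) (N : ℕ) :
    ∃ φ : Lp ℝ 2 M,
      (∀ j < N, ⟪φ, expL2 (μ j)⟫ = 0) ∧
      ⟪φ, expL2 l⟫ = (∏ n ∈ Finset.range N, ((l - μ n)/(l + μ n))) / (2*l) ∧
      ‖φ‖ = Real.sqrt (2*l)⁻¹ := by
  have hm : ∀ n, 0 < μ n := fun n => lt_trans hl (hlt n)
  have hlne : ∀ n, l - μ n ≠ 0 := fun n => sub_ne_zero.mpr (ne_of_lt (hlt n))
  have hlpos : ∀ n, (0:ℝ) < l + μ n := fun n => by have := hm n; linarith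
  refine ⟨cc μ l N • expL2 l + ∑ k ∈ Finset.range N, ck μ l N k • expL2 (μ k), ?_⟩
  set φ : Lp ℝ 2 M := cc μ l N • expL2 l + ∑ k ∈ Finset.range N, ck μ l N k • expL2 (μ k)
    with hφ
  have hb : ∀ b : ℝ, 0 < b → ⟪φ, expL2 b⟫
      = cc μ l N / (b + l) + ∑ k ∈ Finset.range N, ck μ l N k / (b + μ k) := by
    intro b hbpos
    rw [hφ, inner_add_left, real_inner_smul_left, sum_inner, inner_expL2_expL2 hl hbpos]
    congr 1
    · rw [add_comm b l, mul_one_div]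
    · refine Finset.sum_congr rfl fun k hk => ?_
      rw [real_inner_smul_left, inner_expL2_expL2 (hm k) hbpos, add_comm b (μ k), mul_one_div]
  have ha : ∀ j < N, ⟪φ, expL2 (μ j)⟫ = 0 := by
    intro j hj
    rw [hb (μ j) (hm j),
      ratId hl hlt hinj N (by have := hm j; positivity) (fun n => by have := hm j; have := hm n; positivity)]
    have hz : (∏ n ∈ Finset.range N, (μ j - μ n)) = 0 :=
      Finset.prod_eq_zero (Finset.mem_range.mpr hj) (sub_self (μ j))
    rw [hz, zero_div]
  have hbl : ⟪φ, expL2 l⟫ = (∏ n ∈ Finset.range N, ((l - μ n)/(l + μ n))) / (2*l) := by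
    rw [hb l hl, ratId hl hlt hinj N (by positivity) (fun n => by have := hm n; positivity)]
    rw [Finset.prod_div_distrib, div_div]
    congr 1
    ring
  refine ⟨ha, hbl, ?_⟩
  have hself : ⟪φ, φ⟫ = (2*l)⁻¹ := by
    nth_rewrite 1 [hφ]
    rw [inner_add_left, real_inner_smul_left, sum_inner]
    rw [real_inner_comm φ (expL2 l), hbl]
    rw [Finset.sum_eq_zero (fun k hk => by
      rw [real_inner_smul_left, real_inner_comm, ha k (Finset.mem_range.mp hk), mul_zero])]
    rw [add_zero, cc, ← mul_div_assoc, ← Finset.prod_mul_distrib,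
      Finset.prod_eq_one (fun n _ => by
        have h1 := hlne n; have h2 := (hlpos n).ne'
        field_simp), one_div]
  have h2 : ‖φ‖^2 = (2*l)⁻¹ := by rw [← real_inner_self_eq_norm_sq]; exact hself
  have h3 : Real.sqrt (‖φ‖^2) = Real.sqrt (2*l)⁻¹ := by rw [h2]
  rwa [Real.sqrt_sq (norm_nonneg _)] at h3

lemma prod_lower {μ : ℕ → ℝ} {l : ℝ} (hl : 0 < l) (hl2 : ∀ n, 2*l ≤ μ n)
    (hsum : Summable fun n => 1 / μ n) (N : ℕ) :
    Real.exp (-(4*l) * ∑' n, 1/μ n) ≤ ∏ n ∈ Finset.range N, ((μ n - l)/(μ n + l)) := by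
  have hm : ∀ n, 0 < μ n := fun n => lt_of_lt_of_le (by linarith) (hl2 n)
  have hfac : ∀ n, Real.exp (-(4*l)/μ n) ≤ (μ n - l)/(μ n + l) := by
    intro n
    have h1 : 0 < μ n - l := by have := hl2 n; linarith
    have h2 : 0 < μ n + l := by have := hm n; linarith
    set E := Real.exp (-(4*l)/μ n) with hE
    have hE0 : 0 < E := Real.exp_pos _
    set d := 4*l/μ n with hd
    have hd0 : 0 < d := div_pos (by linarith) (hm n)
    have hdμ : d * μ n = 4*l := div_mul_cancel₀ _ (hm n).ne'
    have hd2 : d ≤ 2 := by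
      rw [hd, div_le_iff₀ (hm n)]
      have := hl2 n
      nlinarith
    have hEd : E * (1 + d) ≤ 1 := by
      have h3 := Real.add_one_le_exp d
      calc E * (1 + d) ≤ E * Real.exp d := by
            apply mul_le_mul_of_nonneg_left (by linarith) hE0.le
        _ = 1 := by
            rw [hE, ← Real.exp_add, hd, show -(4*l)/μ n + 4*l/μ n = 0 by ring, Real.exp_zero]
    rw [le_div_iff₀ h2]
    have key : (1 + d) * (μ n - l) - (μ n + l) = (2 - d) * l := by nlinarith [hdμ]
    nlinarith [mul_le_mul_of_nonneg_right hEd h2.le, mul_pos hd0 h1, mul_nonneg (sub_nonneg.mpr hd2) hl.le]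
  calc Real.exp (-(4*l) * ∑' n, 1/μ n)
      ≤ Real.exp (∑ n ∈ Finset.range N, -(4*l)/μ n) := by
        apply Real.exp_le_exp.mpr
        have h4 : ∑ n ∈ Finset.range N, -(4*l)/μ n = -(4*l) * ∑ n ∈ Finset.range N, 1/μ n := by
          rw [Finset.mul_sum]
          refine Finset.sum_congr rfl fun n _ => by ring
        rw [h4]
        have h5 : ∑ n ∈ Finset.range N, 1/μ n ≤ ∑' n, 1/μ n :=
          Summable.sum_le_tsum _ (fun n _ => by have := hm n; positivity) hsum
        nlinarith
    _ = ∏ n ∈ Finset.range N, Real.exp (-(4*l)/μ n) := by rw [Real.exp_sum]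
    _ ≤ ∏ n ∈ Finset.range N, ((μ n - l)/(μ n + l)) := by
        apply Finset.prod_le_prod (fun n _ => (Real.exp_pos _).le) (fun n _ => hfac n)

end MuntzAux

theorem muntz_nondense_half_line
    (μ : ℕ → ℝ) (hpos : ∀ n, 0 < μ n) (hmono : StrictMono μ)
    (hsum : Summable fun n => 1 / μ n) :
    ∃ g : Lp ℝ 2 (volume.restrict (Set.Ici (0 : ℝ))), g ≠ 0 ∧
      ∀ n : ℕ, ∫ t in Set.Ici (0 : ℝ), Real.exp (-(μ n) * t) * (g : ℝ → ℝ) t = 0 := by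
  classical
  set l : ℝ := μ 0 / 2 with hldef
  have hl : 0 < l := by have := hpos 0; rw [hldef]; linarith
  have hl2 : ∀ n, 2*l ≤ μ n := by
    intro n
    have := hmono.monotone (Nat.zero_le n)
    rw [hldef]; linarith
  have hlt : ∀ n, l < μ n := fun n => by linarith [hl2 n]
  have hinj := hmono.injective
  have hS0 : (0:ℝ) ≤ ∑' n, 1/μ n := tsum_nonneg (fun n => by have := hpos n; positivity)
  set δ : ℝ := Real.exp (-(4*l) * ∑' n, 1/μ n) with hδdef
  have hδ0 : 0 < δ := Real.exp_pos _
  set K := (Submodule.span ℝ (Set.range fun n => MuntzAux.expL2 (μ n))).topologicalClosure with hK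
  haveI : CompleteSpace K := (Submodule.isClosed_topologicalClosure _).completeSpace_coe
  set s : ℝ := Real.sqrt (2*l) with hs
  have hs0 : 0 < s := Real.sqrt_pos.mpr (by linarith)
  have hEl : MuntzAux.expL2 l ∉ K := by
    intro hmem
    have hmem' : MuntzAux.expL2 l ∈ closure
        ((Submodule.span ℝ (Set.range fun n => MuntzAux.expL2 (μ n)) : Submodule ℝ _) : Set _) := by
      rw [← Submodule.topologicalClosure_coe]
      exact hmem
    have hε : (0:ℝ) < δ * s / (4*l) := by positivity
    obtain ⟨v, hvmem, hvdist⟩ := Metric.mem_closure_iff.mp hmem' _ hε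
    obtain ⟨c, hc⟩ := Finsupp.mem_span_range_iff_exists_finsupp.mp hvmem
    set N := c.support.sup id + 1 with hN
    obtain ⟨φ, haφ, hbφ, hnφ⟩ := MuntzAux.phi_props hl hlt hinj N
    have hφv : @inner ℝ _ _ φ v = 0 := by
      rw [← hc, Finsupp.sum, inner_sum]
      refine Finset.sum_eq_zero fun i hi => ?_
      rw [real_inner_smul_right, haφ i ?_, mul_zero]
      have h6 : i ≤ c.support.sup id := Finset.le_sup (f := id) hi
      omega
    have hsub : @inner ℝ _ _ φ (MuntzAux.expL2 l - v)
        = (∏ n ∈ Finset.range N, ((l - μ n)/(l + μ n))) / (2*l) := by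
      rw [inner_sub_right, hφv, sub_zero, hbφ]
    have habs : δ/(2*l) ≤ |@inner ℝ _ _ φ (MuntzAux.expL2 l - v)| := by
      rw [hsub, abs_div, abs_of_pos (by linarith : (0:ℝ) < 2*l), Finset.abs_prod]
      apply div_le_div_of_nonneg_right ?_ (by linarith)
      have h7 : ∀ n ∈ Finset.range N, |(l - μ n)/(l + μ n)| = (μ n - l)/(μ n + l) := by
        intro n _
        rw [abs_div, abs_of_neg (by linarith [hlt n] : l - μ n < 0),
          abs_of_pos (by have := hpos n; linarith : (0:ℝ) < l + μ n), neg_sub, add_comm]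
      rw [Finset.prod_congr rfl h7]
      exact MuntzAux.prod_lower hl hl2 hsum N
    have h8 : |@inner ℝ _ _ φ (MuntzAux.expL2 l - v)| ≤ ‖φ‖ * ‖MuntzAux.expL2 l - v‖ :=
      abs_real_inner_le_norm _ _
    have h9 : ‖MuntzAux.expL2 l - v‖ < δ * s / (4*l) := by rwa [← dist_eq_norm]
    have hsne : s ≠ 0 := hs0.ne'
    have h10 : ‖φ‖ = s⁻¹ := by rw [hnφ, hs, ← Real.sqrt_inv]
    have h11 : ‖φ‖ * ‖MuntzAux.expL2 l - v‖ < s⁻¹ * (δ * s / (4*l)) := by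
      rw [h10]
      exact mul_lt_mul_of_pos_left h9 (by positivity)
    have h12 : s⁻¹ * (δ * s / (4*l)) = δ/(4*l) := by
      field_simp
    have h13 : δ/(4*l) < δ/(2*l) := div_lt_div_of_pos_left hδ0 (by linarith) (by linarith)
    linarith
  refine ⟨MuntzAux.expL2 l - (K.orthogonalProjection (MuntzAux.expL2 l) :
      Lp ℝ 2 (volume.restrict (Set.Ici (0:ℝ)))), ?_, ?_⟩
  · intro h0
    apply hEl
    rw [sub_eq_zero] at h0
    rw [h0]
    exact (K.orthogonalProjection (MuntzAux.expL2 l)).2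
  · intro n
    have hgperp := Submodule.sub_starProjection_mem_orthogonal (K := K) (MuntzAux.expL2 l)
    have hEK : MuntzAux.expL2 (μ n) ∈ K :=
      Submodule.le_topologicalClosure _ (Submodule.subset_span ⟨n, rfl⟩)
    have h0 := (Submodule.mem_orthogonal K _).mp hgperp _ hEK
    rw [← MuntzAux.inner_expL2 (hpos n)]
    exact h0
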